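/- Let U be a submodular universe, k ∈ ℕ, and 𝒫 a set of regular profiles of S_k. Then there exists a nested set N ⊆ S_k such that any two distinct profiles in 𝒫 are efficiently distinguished by some separation in N. -/
import Mathlib


namespace SepDemo

/-- A universe of separations: a finite lattice with an order-reversing involution. -/
structure SepUniverse (U : Type*) [Lattice U] [Fintype U] where
  inv : U → U
  inv_inv : ∀ s, inv (inv s) = s
  le_iff : ∀ r s : U, r ≤ s ↔ inv s ≤ inv r

/-- A submodular universe: a universe with a submodular order function. -/
structure SubmodUniverse (U : Type*) [Lattice U] [Fintype U] extends SepUniverse U where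
  ord : U → ℕ
  ord_inv : ∀ s, ord (inv s) = ord s
  submod : ∀ s t : U, ord (s ⊔ t) + ord (s ⊓ t) ≤ ord s + ord t

variable {U : Type*} [Lattice U] [Fintype U]

/-- A separation system inside a universe: a subset closed under the involution. -/
def SepSystem (𝒰 : SepUniverse U) (S : Set U) : Prop :=
  ∀ s ∈ S, 𝒰.inv s ∈ S

/-- An orientation of `S`: contains, for each `s ∈ S`, exactly one of `s`, `s*`
(just `s` itself if `s` is degenerate). -/
def IsOrientation (𝒰 : SepUniverse U) (S O : Set U) : Prop :=
  O ⊆ S ∧ ∀ s ∈ S, (s ∈ O ∨ 𝒰.inv s ∈ O) ∧ (s ∈ O → 𝒰.inv s ∈ O → s = 𝒰.inv s)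

/-- Consistency: no `r, s ∈ O` with `{r,r*} ≠ {s,s*}` and `r* ≤ s`. -/
def Consistent (𝒰 : SepUniverse U) (O : Set U) : Prop :=
  ∀ r ∈ O, ∀ s ∈ O, ({r, 𝒰.inv r} : Set U) ≠ ({s, 𝒰.inv s} : Set U) → ¬ 𝒰.inv r ≤ s

/-- A profile of `S`: a consistent orientation satisfying the profile property. -/
def IsProfile (𝒰 : SepUniverse U) (S P : Set U) : Prop :=
  IsOrientation 𝒰 S P ∧ Consistent 𝒰 P ∧ ∀ r ∈ P, ∀ s ∈ P, 𝒰.inv (r ⊔ s) ∉ P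

/-- Regular: contains no cosmall separation. -/
def Regular (𝒰 : SepUniverse U) (P : Set U) : Prop :=
  ∀ s ∈ P, ¬ 𝒰.inv s ≤ s

/-- Two separations are nested. -/
def Nested (𝒰 : SepUniverse U) (r s : U) : Prop :=
  r ≤ s ∨ r ≤ 𝒰.inv s ∨ 𝒰.inv r ≤ s ∨ 𝒰.inv r ≤ 𝒰.inv s

/-- A set of separations is nested if its members are pairwise nested. -/
def NestedSet (𝒰 : SepUniverse U) (N : Set U) : Prop :=
  ∀ r ∈ N, ∀ s ∈ N, Nested 𝒰 r s

/-- `s` distinguishes the orientations `O₁` and `O₂`. -/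
def Distinguishes (𝒰 : SepUniverse U) (s : U) (O₁ O₂ : Set U) : Prop :=
  (s ∈ O₁ ∧ 𝒰.inv s ∈ O₂) ∨ (𝒰.inv s ∈ O₁ ∧ s ∈ O₂)

/-- Two orientations are distinguishable. -/
def Distinguishable (𝒰 : SepUniverse U) (P Q : Set U) : Prop :=
  ∃ s : U, Distinguishes 𝒰 s P Q

/-- Structural submodularity of a separation system. -/
def StructSubmodular (S : Set U) : Prop :=
  ∀ s ∈ S, ∀ t ∈ S, s ⊔ t ∈ S ∨ s ⊓ t ∈ S

/-- `s` is trivial in `S`. -/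
def IsTrivialIn (𝒰 : SepUniverse U) (S : Set U) (s : U) : Prop :=
  ∃ r ∈ S, ({r, 𝒰.inv r} : Set U) ≠ ({s, 𝒰.inv s} : Set U) ∧ s ≤ r ∧ s ≤ 𝒰.inv r

/-- A star of separations. -/
def IsStar (𝒰 : SepUniverse U) (σ : Set U) : Prop :=
  ∀ r ∈ σ, ∀ s ∈ σ, r ≠ s → r ≤ 𝒰.inv s

/-- The shift `σ_x^{s₀}` of a star `σ` at `x ∈ σ` to `s₀`. -/
def shiftStar (𝒰 : SepUniverse U) (σ : Set U) (x s₀ : U) : Set U :=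
  insert (x ⊔ s₀) ((fun y => y ⊓ 𝒰.inv s₀) '' (σ \ {x}))

/-- `s₀` emulates `r` in `S`. -/
def Emulates (𝒰 : SepUniverse U) (S : Set U) (s₀ r : U) : Prop :=
  r ≤ s₀ ∧ ∀ t ∈ S, t ≠ 𝒰.inv r → r ≤ t → t ⊔ s₀ ∈ S

/-- `s₀` emulates `r` in `S` for a set `F` of stars. -/
def EmulatesFor (𝒰 : SepUniverse U) (S : Set U) (F : Set (Set U)) (s₀ r : U) : Prop :=
  Emulates 𝒰 S s₀ r ∧
    ∀ σ ∈ F, 𝒰.inv r ∉ σ → ∀ x ∈ σ, r ≤ x → shiftStar 𝒰 σ x s₀ ∈ F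

/-- `F` forces `s`. -/
def Forces (𝒰 : SepUniverse U) (F : Set (Set U)) (s : U) : Prop :=
  ({𝒰.inv s} : Set U) ∈ F

/-- `S` is `F`-separable. -/
def FSeparable (𝒰 : SepUniverse U) (S : Set U) (F : Set (Set U)) : Prop :=
  ∀ r₁ ∈ S, ∀ r₂ ∈ S,
    ¬ IsTrivialIn 𝒰 S r₁ → ¬ IsTrivialIn 𝒰 S r₂ →
    r₁ ≠ 𝒰.inv r₁ → r₂ ≠ 𝒰.inv r₂ →
    ¬ Forces 𝒰 F r₁ → ¬ Forces 𝒰 F r₂ →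
    r₁ ≤ 𝒰.inv r₂ →
    ∃ s₀ ∈ S, r₁ ≤ s₀ ∧ s₀ ≤ 𝒰.inv r₂ ∧
      EmulatesFor 𝒰 S F s₀ r₁ ∧ EmulatesFor 𝒰 S F (𝒰.inv s₀) r₂

/-- `r` is `F`-critical. -/
def FCritical (𝒰 : SepUniverse U) (F : Set (Set U)) (r : U) : Prop :=
  (∃ σ ∈ F, r ∈ σ) ∧
    ¬ ∃ σ' ∈ F, σ' ∩ ({r, 𝒰.inv r} : Set U) = ({𝒰.inv r} : Set U)

/-- `S` is critically `F`-separable. -/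
def CritFSeparable (𝒰 : SepUniverse U) (S : Set U) (F : Set (Set U)) : Prop :=
  ∀ r₁ ∈ S, ∀ r₂ ∈ S, FCritical 𝒰 F r₁ → FCritical 𝒰 F r₂ → r₁ ≤ 𝒰.inv r₂ →
    ∃ s₀ ∈ S, EmulatesFor 𝒰 S F s₀ r₁ ∧ EmulatesFor 𝒰 S F (𝒰.inv s₀) r₂

/-- An `F`-tangle of `S`: a consistent orientation including no member of `F`. -/
def FTangle (𝒰 : SepUniverse U) (S : Set U) (F : Set (Set U)) (O : Set U) : Prop :=
  IsOrientation 𝒰 S O ∧ Consistent 𝒰 O ∧ ∀ σ ∈ F, ¬ σ ⊆ O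

/-- `F` is standard for `S`: it forces all trivial separations of `S`. -/
def StandardFor (𝒰 : SepUniverse U) (S : Set U) (F : Set (Set U)) : Prop :=
  ∀ r ∈ S, IsTrivialIn 𝒰 S r → ({𝒰.inv r} : Set U) ∈ F

/-- An `S`-tree: a finite tree together with edge labels in `S` commuting with
the involution. -/
structure STree (𝒰 : SepUniverse U) (S : Set U) where
  V : Type
  fintypeV : Fintype V
  G : SimpleGraph V
  isTree : G.IsTree
  label : V → V → U
  label_mem : ∀ x y, G.Adj x y → label x y ∈ S
  label_inv : ∀ x y, G.Adj x y → label y x = 𝒰.inv (label x y)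

namespace STree

variable {𝒰 : SepUniverse U} {S : Set U}

/-- The star `α(t)` associated with a node `t`. -/
def nodeStar (T : STree 𝒰 S) (t : T.V) : Set U :=
  {u | ∃ s, T.G.Adj s t ∧ T.label s t = u}

/-- The `S`-tree is over `F`. -/
def Over (T : STree 𝒰 S) (F : Set (Set U)) : Prop :=
  ∀ t : T.V, T.nodeStar t ∈ F

/-- Irredundance of an `S`-tree. -/
def Irredundant (T : STree 𝒰 S) : Prop :=
  ∀ t t' t'' : T.V, T.G.Adj t' t → T.G.Adj t'' t → t' ≠ t'' →
    T.label t' t ≠ T.label t'' t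

/-- The set of edge labels of the tree. -/
def labels (T : STree 𝒰 S) : Set U :=
  {u | ∃ x y, T.G.Adj x y ∧ T.label x y = u}

/-- `t` is a sink of the orientation of the tree induced by `P`. -/
def IsSinkOf (T : STree 𝒰 S) (P : Set U) (t : T.V) : Prop :=
  ∀ s, T.G.Adj s t → T.label s t ∈ P

/-- The degree of a node. -/
noncomputable def deg (T : STree 𝒰 S) (t : T.V) : ℕ :=
  (T.G.neighborSet t).ncard

/-- The maximum degree of the tree. -/
noncomputable def maxDeg (T : STree 𝒰 S) : ℕ :=
  sSup {n | ∃ t : T.V, T.deg t = n}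

end STree

/-- A tree of tangles for `S`: an irredundant `S`-tree whose edge labels
distinguish every two distinct regular profiles of `S`. -/
def TreeOfTangles (𝒰 : SepUniverse U) (S : Set U) (T : STree 𝒰 S) : Prop :=
  T.Irredundant ∧
    ∀ P Q : Set U, IsProfile 𝒰 S P → Regular 𝒰 P → IsProfile 𝒰 S Q → Regular 𝒰 Q →
      P ≠ Q → ∃ s ∈ T.labels, Distinguishes 𝒰 s P Q

/-- `δ(P)`: the minimum size of a subset of `P` distinguishing `P` from every
other regular profile of `S`. -/
noncomputable def deltaP (𝒰 : SepUniverse U) (S P : Set U) : ℕ :=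
  sInf {n | ∃ D : Set U, D ⊆ P ∧ D.ncard = n ∧
    ∀ Q : Set U, IsProfile 𝒰 S Q → Regular 𝒰 Q → Q ≠ P →
      ∃ s ∈ D, Distinguishes 𝒰 s P Q}

/-- `S_k`: the separations of order less than `k`. -/
def Sk (𝒱 : SubmodUniverse U) (k : ℕ) : Set U := {s | 𝒱.ord s < k}

/-- `s` distinguishes `P` and `Q` efficiently. -/
def EffDistinguishes (𝒱 : SubmodUniverse U) (s : U) (P Q : Set U) : Prop :=
  Distinguishes 𝒱.toSepUniverse s P Q ∧
    ∀ t : U, Distinguishes 𝒱.toSepUniverse t P Q → 𝒱.ord s ≤ 𝒱.ord t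

/-- Property `Eff(P)` of a star `σ`. -/
def EffProp (𝒱 : SubmodUniverse U) (σ P : Set U) : Prop :=
  ¬ ∃ s ∈ σ, ∃ s' ∈ P, s ≤ s' ∧ 𝒱.ord s' < 𝒱.ord s

/-- `s` is a splice for `r`. -/
def SpliceFor (𝒱 : SubmodUniverse U) (s r : U) : Prop :=
  r ≤ s ∧ ¬ ∃ t : U, r ≤ t ∧ t ≤ s ∧ 𝒱.ord t < 𝒱.ord s

/-- `s` is a splice between `r₁` and `r₂`. -/
def SpliceBetween (𝒱 : SubmodUniverse U) (s r₁ r₂ : U) : Prop :=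
  r₁ ≤ s ∧ s ≤ r₂ ∧ ∀ t : U, r₁ ≤ t → t ≤ r₂ → 𝒱.ord s ≤ 𝒱.ord t

/-- The set `F_e` of stars in `S_k` included in at most one profile of `𝔓` and
satisfying `Eff(P)` whenever included in `P ∈ 𝔓`. -/
def Fe (𝒱 : SubmodUniverse U) (k : ℕ) (𝔓 : Set (Set U)) : Set (Set U) :=
  {σ | σ ⊆ Sk 𝒱 k ∧ IsStar 𝒱.toSepUniverse σ ∧
    (∀ P ∈ 𝔓, ∀ Q ∈ 𝔓, σ ⊆ P → σ ⊆ Q → P = Q) ∧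
    (∀ P ∈ 𝔓, σ ⊆ P → EffProp 𝒱 σ P)}

/-- `δ_e(P)`: the minimum size of a star `σ ⊆ P` with `Eff(P)` such that every
other regular profile of `S_k` contains the inverse of some element of `σ`. -/
noncomputable def deltaE (𝒱 : SubmodUniverse U) (k : ℕ) (P : Set U) : ℕ :=
  sInf {n | ∃ σ : Set U, σ ⊆ P ∧ IsStar 𝒱.toSepUniverse σ ∧ EffProp 𝒱 σ P ∧
    σ.ncard = n ∧
    ∀ Q : Set U, IsProfile 𝒱.toSepUniverse (Sk 𝒱 k) Q → Regular 𝒱.toSepUniverse Q →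
      Q ≠ P → ∃ s ∈ σ, 𝒱.inv s ∈ Q}

/-- `δ_{e,max}`: maximum of `δ_e` over all regular profiles of `S_k`. -/
noncomputable def deltaEMax (𝒱 : SubmodUniverse U) (k : ℕ) : ℕ :=
  sSup {n | ∃ P : Set U, IsProfile 𝒱.toSepUniverse (Sk 𝒱 k) P ∧
    Regular 𝒱.toSepUniverse P ∧ deltaE 𝒱 k P = n}

/-- `P` is a profile in `U`: a `k`-profile for some `k`. -/
def ProfileIn (𝒱 : SubmodUniverse U) (P : Set U) : Prop :=
  ∃ k : ℕ, IsProfile 𝒱.toSepUniverse (Sk 𝒱 k) P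

/-- Strong robustness of a profile. -/
def StronglyRobust (𝒱 : SubmodUniverse U) (P : Set U) : Prop :=
  ∀ s ∈ P, ∀ r : U, 𝒱.ord (s ⊔ r) ≤ 𝒱.ord s → 𝒱.ord (s ⊔ 𝒱.inv r) ≤ 𝒱.ord s →
    (s ⊔ r ∈ P ∨ s ⊔ 𝒱.inv r ∈ P)

/-- `O` weakly orients a separation as `s'` if `s' ≤ r` for some `r ∈ O`. -/
def WeaklyOrientsAs (O : Set U) (s' : U) : Prop :=
  ∃ r ∈ O, s' ≤ r

/-- `O` weakly orients `s` (as `s` or as `s*`). -/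
def WeaklyOrients (𝒰 : SepUniverse U) (O : Set U) (s : U) : Prop :=
  WeaklyOrientsAs O s ∨ WeaklyOrientsAs O (𝒰.inv s)

/-- The set `F_d` of stars, relative to the set of profiles `𝔓`. -/
def Fd (𝒱 : SubmodUniverse U) (𝔓 : Set (Set U)) : Set (Set U) :=
  {σ | IsStar 𝒱.toSepUniverse σ ∧
    (∀ P ∈ 𝔓, ∀ Q ∈ 𝔓, σ ⊆ P → σ ⊆ Q → P = Q) ∧
    (∀ P ∈ 𝔓, ¬ σ ⊆ P → ∃ s ∈ σ, WeaklyOrientsAs P (𝒱.inv s)) ∧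
    (∀ P ∈ 𝔓, σ ⊆ P → EffProp 𝒱 σ P)}
section Auxiliary

lemma uinv_le (𝒰 : SepUniverse U) {a b : U} (h : a ≤ b) : 𝒰.inv b ≤ 𝒰.inv a :=
  (𝒰.le_iff a b).mp h

lemma le_of_uinv_le (𝒰 : SepUniverse U) {a b : U} (h : 𝒰.inv b ≤ 𝒰.inv a) : a ≤ b :=
  (𝒰.le_iff a b).mpr h

lemma uinv_sup (𝒰 : SepUniverse U) (a b : U) :
    𝒰.inv (a ⊔ b) = 𝒰.inv a ⊓ 𝒰.inv b := by
  apply le_antisymm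
  · exact le_inf (uinv_le 𝒰 le_sup_left) (uinv_le 𝒰 le_sup_right)
  · have h1 : a ≤ 𝒰.inv (𝒰.inv a ⊓ 𝒰.inv b) := by
      have := uinv_le 𝒰 (inf_le_left : 𝒰.inv a ⊓ 𝒰.inv b ≤ 𝒰.inv a)
      rwa [𝒰.inv_inv] at this
    have h2 : b ≤ 𝒰.inv (𝒰.inv a ⊓ 𝒰.inv b) := by
      have := uinv_le 𝒰 (inf_le_right : 𝒰.inv a ⊓ 𝒰.inv b ≤ 𝒰.inv b)
      rwa [𝒰.inv_inv] at this
    have := uinv_le 𝒰 (sup_le h1 h2)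
    rwa [𝒰.inv_inv] at this

lemma uinv_inf (𝒰 : SepUniverse U) (a b : U) :
    𝒰.inv (a ⊓ b) = 𝒰.inv a ⊔ 𝒰.inv b := by
  have h := uinv_sup 𝒰 (𝒰.inv a) (𝒰.inv b)
  rw [𝒰.inv_inv, 𝒰.inv_inv] at h
  rw [← h, 𝒰.inv_inv]

lemma nested_refl (𝒰 : SepUniverse U) (s : U) : Nested 𝒰 s s := Or.inl le_rfl

lemma nested_symm {𝒰 : SepUniverse U} {r s : U} (h : Nested 𝒰 r s) : Nested 𝒰 s r := by
  rcases h with h | h | h | h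
  · exact Or.inr (Or.inr (Or.inr (uinv_le 𝒰 h)))
  · refine Or.inr (Or.inl ?_)
    have := uinv_le 𝒰 h
    rwa [𝒰.inv_inv] at this
  · refine Or.inr (Or.inr (Or.inl ?_))
    have := uinv_le 𝒰 h
    rwa [𝒰.inv_inv] at this
  · exact Or.inl (le_of_uinv_le 𝒰 h)

lemma nested_inv_right {𝒰 : SepUniverse U} {r s : U} (h : Nested 𝒰 r s) :
    Nested 𝒰 r (𝒰.inv s) := by
  rcases h with h | h | h | h
  · exact Or.inr (Or.inl (by rw [𝒰.inv_inv]; exact h))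
  · exact Or.inl h
  · exact Or.inr (Or.inr (Or.inr (by rw [𝒰.inv_inv]; exact h)))
  · exact Or.inr (Or.inr (Or.inl h))

lemma nested_inv_right_iff {𝒰 : SepUniverse U} {r s : U} :
    Nested 𝒰 r (𝒰.inv s) ↔ Nested 𝒰 r s :=
  ⟨fun h => by have := nested_inv_right h; rwa [𝒰.inv_inv] at this, nested_inv_right⟩

lemma nested_inv_left {𝒰 : SepUniverse U} {r s : U} (h : Nested 𝒰 r s) :
    Nested 𝒰 (𝒰.inv r) s :=
  nested_symm (nested_inv_right (nested_symm h))

lemma nested_inv_left_iff {𝒰 : SepUniverse U} {r s : U} :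
    Nested 𝒰 (𝒰.inv r) s ↔ Nested 𝒰 r s :=
  ⟨fun h => by have := nested_inv_left h; rwa [𝒰.inv_inv] at this, nested_inv_left⟩

lemma nested_sup {𝒰 : SepUniverse U} {s t u : U} (hcross : ¬ Nested 𝒰 s t)
    (hus : Nested 𝒰 u s) (hut : Nested 𝒰 u t) : Nested 𝒰 u (s ⊔ t) := by
  rcases hus with h | h | h | h
  · exact Or.inl (h.trans le_sup_left)
  · rcases hut with h' | h' | h' | h'
    · exact Or.inl (h'.trans le_sup_right)
    · exact Or.inr (Or.inl (by rw [uinv_sup]; exact le_inf h h'))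
    · exact Or.inr (Or.inr (Or.inl (h'.trans le_sup_right)))
    · exfalso
      have htu : t ≤ u := le_of_uinv_le 𝒰 h'
      have h2 : 𝒰.inv (𝒰.inv s) ≤ 𝒰.inv t := uinv_le 𝒰 (htu.trans h)
      rw [𝒰.inv_inv] at h2
      exact hcross (Or.inr (Or.inl h2))
  · exact Or.inr (Or.inr (Or.inl (h.trans le_sup_left)))
  · rcases hut with h' | h' | h' | h'
    · exact Or.inl (h'.trans le_sup_right)
    · exfalso
      have hsu : s ≤ u := le_of_uinv_le 𝒰 h
      exact hcross (Or.inr (Or.inl (hsu.trans h')))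
    · exact Or.inr (Or.inr (Or.inl (h'.trans le_sup_right)))
    · exact Or.inr (Or.inr (Or.inr (by rw [uinv_sup]; exact le_inf h h')))

lemma corner_nested {𝒰 : SepUniverse U} {s t c : U} (hcross : ¬ Nested 𝒰 s t)
    (hc : c = s ⊔ t ∨ c = s ⊓ t ∨ c = 𝒰.inv s ⊔ t) :
    Nested 𝒰 c t ∧ ∀ u, Nested 𝒰 u s → Nested 𝒰 u t → Nested 𝒰 u c := by
  rcases hc with rfl | rfl | rfl
  · exact ⟨Or.inr (Or.inr (Or.inr (uinv_le 𝒰 le_sup_right))),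
      fun u hus hut => nested_sup hcross hus hut⟩
  · have hkey : 𝒰.inv (𝒰.inv s ⊔ 𝒰.inv t) = s ⊓ t := by
      rw [uinv_sup, 𝒰.inv_inv, 𝒰.inv_inv]
    have hcross' : ¬ Nested 𝒰 (𝒰.inv s) (𝒰.inv t) := fun h =>
      hcross (nested_inv_right_iff.mp (nested_inv_left_iff.mp h))
    refine ⟨Or.inl inf_le_right, fun u hus hut => ?_⟩
    have h1 := nested_sup hcross' (nested_inv_right hus) (nested_inv_right hut)
    have h2 := nested_inv_right h1
    rwa [hkey] at h2
  · have hcross' : ¬ Nested 𝒰 (𝒰.inv s) t := fun h => hcross (nested_inv_left_iff.mp h)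
    exact ⟨Or.inr (Or.inr (Or.inr (uinv_le 𝒰 le_sup_right))),
      fun u hus hut => nested_sup hcross' (nested_inv_right hus) hut⟩

lemma dist_comm {𝒰 : SepUniverse U} {s : U} {P Q : Set U}
    (h : Distinguishes 𝒰 s P Q) : Distinguishes 𝒰 s Q P := by
  rcases h with ⟨a, b⟩ | ⟨a, b⟩
  · exact Or.inr ⟨b, a⟩
  · exact Or.inl ⟨b, a⟩

lemma dist_inv {𝒰 : SepUniverse U} {s : U} {P Q : Set U}
    (h : Distinguishes 𝒰 s P Q) : Distinguishes 𝒰 (𝒰.inv s) P Q := by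
  rcases h with ⟨a, b⟩ | ⟨a, b⟩
  · exact Or.inr ⟨by rw [𝒰.inv_inv]; exact a, b⟩
  · exact Or.inl ⟨a, by rw [𝒰.inv_inv]; exact b⟩

variable {𝒱 : SubmodUniverse U} {k : ℕ}

lemma dist_ord_lt {P Q : Set U} (hP : IsProfile 𝒱.toSepUniverse (Sk 𝒱 k) P)
    {s : U} (h : Distinguishes 𝒱.toSepUniverse s P Q) : 𝒱.ord s < k := by
  rcases h with ⟨a, _⟩ | ⟨a, _⟩
  · exact hP.1.1 a
  · have h2 : 𝒱.ord (𝒱.inv s) < k := hP.1.1 a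
    rwa [𝒱.ord_inv] at h2

lemma mem_of_le {P : Set U}
    (hP : IsProfile 𝒱.toSepUniverse (Sk 𝒱 k) P) (hPr : Regular 𝒱.toSepUniverse P)
    {x y : U} (hx : 𝒱.ord x < k) (hy : y ∈ P) (hxy : x ≤ y) : x ∈ P := by
  rcases (hP.1.2 x hx).1 with h | h
  · exact h
  · by_cases heq : ({𝒱.inv x, 𝒱.inv (𝒱.inv x)} : Set U) = {y, 𝒱.inv y}
    · have hxm : x ∈ ({𝒱.inv x, 𝒱.inv (𝒱.inv x)} : Set U) := by
        rw [𝒱.inv_inv]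
        exact Set.mem_insert_of_mem _ rfl
      rw [heq] at hxm
      rcases Set.mem_insert_iff.mp hxm with h1 | h1
      · exact h1 ▸ hy
      · have h1' : x = 𝒱.inv y := Set.mem_singleton_iff.mp h1
        exact absurd (by rw [← h1']; exact hxy) (hPr y hy)
    · exact absurd (by rw [𝒱.inv_inv]; exact hxy) (hP.2.1 _ h _ hy heq)

lemma sup_mem {P : Set U}
    (hP : IsProfile 𝒱.toSepUniverse (Sk 𝒱 k) P)
    {x y : U} (hx : x ∈ P) (hy : y ∈ P) (h : 𝒱.ord (x ⊔ y) < k) : x ⊔ y ∈ P := by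
  rcases (hP.1.2 (x ⊔ y) h).1 with h' | h'
  · exact h'
  · exact absurd h' (hP.2.2 x hx y hy)

lemma corner_dist {P Q : Set U}
    (hP : IsProfile 𝒱.toSepUniverse (Sk 𝒱 k) P)
    (hQ : IsProfile 𝒱.toSepUniverse (Sk 𝒱 k) Q) (hQr : Regular 𝒱.toSepUniverse Q)
    {x y : U} (hx : x ∈ P) (hy : y ∈ P) (hy' : 𝒱.inv y ∈ Q)
    (h : 𝒱.ord (x ⊔ y) < k) : x ⊔ y ∈ P ∧ 𝒱.inv (x ⊔ y) ∈ Q := by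
  refine ⟨sup_mem hP hx hy h, ?_⟩
  exact mem_of_le hQ hQr (by rw [𝒱.ord_inv]; exact h) hy'
    (uinv_le 𝒱.toSepUniverse le_sup_right)

lemma key_core {P Q P' Q' : Set U} {s t : U}
    (hP : IsProfile 𝒱.toSepUniverse (Sk 𝒱 k) P) (hPr : Regular 𝒱.toSepUniverse P)
    (hQ : IsProfile 𝒱.toSepUniverse (Sk 𝒱 k) Q) (hQr : Regular 𝒱.toSepUniverse Q)
    (hP' : IsProfile 𝒱.toSepUniverse (Sk 𝒱 k) P') (hP'r : Regular 𝒱.toSepUniverse P')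
    (hQ' : IsProfile 𝒱.toSepUniverse (Sk 𝒱 k) Q') (hQ'r : Regular 𝒱.toSepUniverse Q')
    (hsP : s ∈ P) (hsQ : 𝒱.inv s ∈ Q)
    (htP : t ∈ P) (htP' : t ∈ P') (htQ' : 𝒱.inv t ∈ Q')
    (htmin : ∀ u, Distinguishes 𝒱.toSepUniverse u P' Q' → 𝒱.ord t ≤ 𝒱.ord u) :
    ∃ c, Distinguishes 𝒱.toSepUniverse c P Q ∧ 𝒱.ord c ≤ 𝒱.ord s ∧
      (c = s ⊔ t ∨ c = s ⊓ t ∨ c = 𝒱.inv s ⊔ t) := by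
  have hks : 𝒱.ord s < k := hP.1.1 hsP
  have hkt : 𝒱.ord t < k := hP.1.1 htP
  have hsupc : t ⊔ s = s ⊔ t := sup_comm t s
  have hinv_st : 𝒱.inv (𝒱.inv s ⊔ 𝒱.inv t) = s ⊓ t := by
    rw [uinv_sup, 𝒱.inv_inv, 𝒱.inv_inv]
  have hord_inf : 𝒱.ord (𝒱.inv s ⊔ 𝒱.inv t) = 𝒱.ord (s ⊓ t) := by
    rw [← hinv_st, 𝒱.ord_inv]
  by_cases h1 : 𝒱.ord (s ⊔ t) ≤ 𝒱.ord s
  · refine ⟨s ⊔ t, ?_, h1, Or.inl rfl⟩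
    obtain ⟨m1, m2⟩ := corner_dist hP hQ hQr htP hsP hsQ
      (by rw [hsupc]; exact lt_of_le_of_lt h1 hks)
    exact Or.inl ⟨by rwa [hsupc] at m1, by rwa [hsupc] at m2⟩
  · rcases (hQ.1.2 t hkt).1 with htQ | htQ
    · -- t ∈ Q : t does not distinguish P and Q
      by_cases h2 : 𝒱.ord (𝒱.inv s ⊔ t) ≤ 𝒱.ord s
      · refine ⟨𝒱.inv s ⊔ t, ?_, h2, Or.inr (Or.inr rfl)⟩
        have hc : t ⊔ 𝒱.inv s = 𝒱.inv s ⊔ t := sup_comm _ _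
        obtain ⟨m1, m2⟩ := corner_dist hQ hP hPr htQ hsQ (by rw [𝒱.inv_inv]; exact hsP)
          (by rw [hc]; exact lt_of_le_of_lt h2 hks)
        exact Or.inr ⟨by rwa [hc] at m2, by rwa [hc] at m1⟩
      · exfalso
        have sub1 := 𝒱.submod s t
        have sub2 := 𝒱.submod (𝒱.inv s) t
        rw [𝒱.ord_inv] at sub2
        push_neg at h1 h2
        have hm1 : 𝒱.ord (s ⊓ t) < 𝒱.ord t := by omega
        have hm2 : 𝒱.ord (𝒱.inv s ⊓ t) < 𝒱.ord t := by omega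
        rcases (hQ'.1.2 s hks).1 with hsQ' | hsQ'
        · have hd1 : 𝒱.inv (s ⊔ 𝒱.inv t) = 𝒱.inv s ⊓ t := by
            rw [uinv_sup, 𝒱.inv_inv]
          have hordd : 𝒱.ord (s ⊔ 𝒱.inv t) < k := by
            rw [← 𝒱.ord_inv (s ⊔ 𝒱.inv t), hd1]
            exact lt_trans hm2 hkt
          obtain ⟨m1, m2⟩ := corner_dist hQ' hP' hP'r hsQ' htQ'
            (by rw [𝒱.inv_inv]; exact htP') hordd
          have hdist : Distinguishes 𝒱.toSepUniverse (s ⊔ 𝒱.inv t) P' Q' := Or.inr ⟨m2, m1⟩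
          have hle := htmin _ hdist
          rw [← 𝒱.ord_inv (s ⊔ 𝒱.inv t), hd1] at hle
          omega
        · have hordd : 𝒱.ord (𝒱.inv s ⊔ 𝒱.inv t) < k := by
            rw [hord_inf]; exact lt_trans hm1 hkt
          obtain ⟨m1, m2⟩ := corner_dist hQ' hP' hP'r hsQ' htQ'
            (by rw [𝒱.inv_inv]; exact htP') hordd
          have hdist : Distinguishes 𝒱.toSepUniverse (𝒱.inv s ⊔ 𝒱.inv t) P' Q' := Or.inr ⟨m2, m1⟩
          have hle := htmin _ hdist
          rw [hord_inf] at hle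
          omega
    · -- inv t ∈ Q : t distinguishes P and Q
      by_cases h2 : 𝒱.ord (s ⊓ t) ≤ 𝒱.ord s
      · refine ⟨s ⊓ t, ?_, h2, Or.inr (Or.inl rfl)⟩
        have hordd : 𝒱.ord (𝒱.inv s ⊔ 𝒱.inv t) < k := by
          rw [hord_inf]; exact lt_of_le_of_lt h2 hks
        obtain ⟨m1, m2⟩ := corner_dist hQ hP hPr hsQ htQ
          (by rw [𝒱.inv_inv]; exact htP) hordd
        refine Or.inl ⟨by rwa [hinv_st] at m2, ?_⟩
        rw [uinv_inf]
        exact m1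
      · exfalso
        have sub1 := 𝒱.submod s t
        push_neg at h1 h2
        have hu1 : 𝒱.ord (s ⊔ t) < 𝒱.ord t := by omega
        have hu2 : 𝒱.ord (s ⊓ t) < 𝒱.ord t := by omega
        rcases (hP'.1.2 s hks).1 with hsP' | hsP'
        · obtain ⟨m1, m2⟩ := corner_dist hP' hQ' hQ'r hsP' htP' htQ' (lt_trans hu1 hkt)
          have hle := htmin _ (Or.inl ⟨m1, m2⟩ :
            Distinguishes 𝒱.toSepUniverse (s ⊔ t) P' Q')
          omega
        · rcases (hQ'.1.2 s hks).1 with hsQ' | hsQ'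
          · have hle := htmin s (Or.inr ⟨hsP', hsQ'⟩)
            omega
          · have hordd : 𝒱.ord (𝒱.inv s ⊔ 𝒱.inv t) < k := by
              rw [hord_inf]; exact lt_trans hu2 hkt
            obtain ⟨m1, m2⟩ := corner_dist hQ' hP' hP'r hsQ' htQ'
              (by rw [𝒱.inv_inv]; exact htP') hordd
            have hdist : Distinguishes 𝒱.toSepUniverse (𝒱.inv s ⊔ 𝒱.inv t) P' Q' :=
              Or.inr ⟨m2, m1⟩
            have hle := htmin _ hdist
            rw [hord_inf] at hle
            omega

lemma key_oriented {P Q P' Q' : Set U} {s t : U}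
    (hP : IsProfile 𝒱.toSepUniverse (Sk 𝒱 k) P) (hPr : Regular 𝒱.toSepUniverse P)
    (hQ : IsProfile 𝒱.toSepUniverse (Sk 𝒱 k) Q) (hQr : Regular 𝒱.toSepUniverse Q)
    (hP' : IsProfile 𝒱.toSepUniverse (Sk 𝒱 k) P') (hP'r : Regular 𝒱.toSepUniverse P')
    (hQ' : IsProfile 𝒱.toSepUniverse (Sk 𝒱 k) Q') (hQ'r : Regular 𝒱.toSepUniverse Q')
    (hsP : s ∈ P) (hsQ : 𝒱.inv s ∈ Q)
    (hsmin : ∀ u, Distinguishes 𝒱.toSepUniverse u P Q → 𝒱.ord s ≤ 𝒱.ord u)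
    (htP' : t ∈ P') (htQ' : 𝒱.inv t ∈ Q')
    (htmin : ∀ u, Distinguishes 𝒱.toSepUniverse u P' Q' → 𝒱.ord t ≤ 𝒱.ord u)
    (hcross : ¬ Nested 𝒱.toSepUniverse s t) :
    ∃ c, EffDistinguishes 𝒱 c P Q ∧ Nested 𝒱.toSepUniverse c t ∧
      ∀ u, Nested 𝒱.toSepUniverse u s → Nested 𝒱.toSepUniverse u t →
        Nested 𝒱.toSepUniverse u c := by
  have hkt' : 𝒱.ord t < k := hP'.1.1 htP'
  rcases (hP.1.2 t hkt').1 with htP | htP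
  · obtain ⟨c, hcd, hco, hcc⟩ := key_core hP hPr hQ hQr hP' hP'r hQ' hQ'r
      hsP hsQ htP htP' htQ' htmin
    obtain ⟨hn1, hn2⟩ := corner_nested hcross hcc
    exact ⟨c, ⟨hcd, fun u hu => le_trans hco (hsmin u hu)⟩, hn1, hn2⟩
  · have htmin' : ∀ u, Distinguishes 𝒱.toSepUniverse u Q' P' →
        𝒱.ord (𝒱.inv t) ≤ 𝒱.ord u := by
      intro u hu
      rw [𝒱.ord_inv]
      exact htmin u (dist_comm hu)
    obtain ⟨c, hcd, hco, hcc⟩ := key_core hP hPr hQ hQr hQ' hQ'r hP' hP'r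
      hsP hsQ htP htQ' (by rw [𝒱.inv_inv]; exact htP') htmin'
    have hcross' : ¬ Nested 𝒱.toSepUniverse s (𝒱.inv t) := fun h =>
      hcross (nested_inv_right_iff.mp h)
    obtain ⟨hn1, hn2⟩ := corner_nested hcross' hcc
    exact ⟨c, ⟨hcd, fun u hu => le_trans hco (hsmin u hu)⟩,
      nested_inv_right_iff.mp hn1,
      fun u hus hut => hn2 u hus (nested_inv_right hut)⟩

lemma key_lemma {P Q P' Q' : Set U} {s t : U}
    (hP : IsProfile 𝒱.toSepUniverse (Sk 𝒱 k) P) (hPr : Regular 𝒱.toSepUniverse P)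
    (hQ : IsProfile 𝒱.toSepUniverse (Sk 𝒱 k) Q) (hQr : Regular 𝒱.toSepUniverse Q)
    (hP' : IsProfile 𝒱.toSepUniverse (Sk 𝒱 k) P') (hP'r : Regular 𝒱.toSepUniverse P')
    (hQ' : IsProfile 𝒱.toSepUniverse (Sk 𝒱 k) Q') (hQ'r : Regular 𝒱.toSepUniverse Q')
    (hs : EffDistinguishes 𝒱 s P Q) (ht : EffDistinguishes 𝒱 t P' Q')
    (hcross : ¬ Nested 𝒱.toSepUniverse s t) :
    ∃ c, EffDistinguishes 𝒱 c P Q ∧ Nested 𝒱.toSepUniverse c t ∧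
      ∀ u, Nested 𝒱.toSepUniverse u s → Nested 𝒱.toSepUniverse u t →
        Nested 𝒱.toSepUniverse u c := by
  have hsmin' : ∀ u, Distinguishes 𝒱.toSepUniverse u P Q →
      𝒱.ord (𝒱.inv s) ≤ 𝒱.ord u := fun u hu => by
    rw [𝒱.ord_inv]; exact hs.2 u hu
  have hcrossinv : ¬ Nested 𝒱.toSepUniverse (𝒱.inv s) t := fun h =>
    hcross (nested_inv_left_iff.mp h)
  have htmin2 : ∀ u, Distinguishes 𝒱.toSepUniverse u Q' P' →
      𝒱.ord t ≤ 𝒱.ord u := fun u hu => ht.2 u (dist_comm hu)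
  rcases hs.1 with ⟨hsP, hsQ⟩ | ⟨hsP, hsQ⟩ <;>
    rcases ht.1 with ⟨htP', htQ'⟩ | ⟨htP', htQ'⟩
  · exact key_oriented hP hPr hQ hQr hP' hP'r hQ' hQ'r hsP hsQ hs.2 htP' htQ' ht.2 hcross
  · exact key_oriented hP hPr hQ hQr hQ' hQ'r hP' hP'r hsP hsQ hs.2 htQ' htP' htmin2 hcross
  · obtain ⟨c, h1, h2, h3⟩ := key_oriented hP hPr hQ hQr hP' hP'r hQ' hQ'r hsP
      (by rw [𝒱.inv_inv]; exact hsQ) hsmin' htP' htQ' ht.2 hcrossinv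
    exact ⟨c, h1, h2, fun u hus hut => h3 u (nested_inv_right hus) hut⟩
  · obtain ⟨c, h1, h2, h3⟩ := key_oriented hP hPr hQ hQr hQ' hQ'r hP' hP'r hsP
      (by rw [𝒱.inv_inv]; exact hsQ) hsmin' htQ' htP' htmin2 hcrossinv
    exact ⟨c, h1, h2, fun u hus hut => h3 u (nested_inv_right hus) hut⟩

lemma exists_eff {P Q : Set U}
    (hP : IsProfile 𝒱.toSepUniverse (Sk 𝒱 k) P)
    (hQ : IsProfile 𝒱.toSepUniverse (Sk 𝒱 k) Q)
    (hne : P ≠ Q) : ∃ s, EffDistinguishes 𝒱 s P Q := by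
  have hex : ∃ u, Distinguishes 𝒱.toSepUniverse u P Q := by
    obtain ⟨x, hx⟩ : ∃ x, ¬ (x ∈ P ↔ x ∈ Q) := by
      by_contra h
      push_neg at h
      exact hne (Set.ext h)
    by_cases hxP : x ∈ P
    · have hxQ : x ∉ Q := fun h => hx ⟨fun _ => h, fun _ => hxP⟩
      rcases (hQ.1.2 x (hP.1.1 hxP)).1 with h | h
      · exact absurd h hxQ
      · exact ⟨x, Or.inl ⟨hxP, h⟩⟩
    · have hxQ : x ∈ Q := by
        by_contra h
        exact hx (iff_of_false hxP h)
      rcases (hP.1.2 x (hQ.1.1 hxQ)).1 with h | h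
      · exact absurd h hxP
      · exact ⟨x, Or.inr ⟨h, hxQ⟩⟩
  obtain ⟨u, hu⟩ := hex
  have hA : ({n | ∃ v, Distinguishes 𝒱.toSepUniverse v P Q ∧ 𝒱.ord v = n}).Nonempty :=
    ⟨𝒱.ord u, u, hu, rfl⟩
  obtain ⟨v, hv, hveq⟩ := Nat.sInf_mem hA
  exact ⟨v, hv, fun w hw => by
    rw [hveq]
    exact Nat.sInf_le ⟨w, hw, rfl⟩⟩

end Auxiliary
/-- For a set `𝔓` of regular profiles of `S_k` in a submodular
universe there is a nested set `N ⊆ S_k` efficiently distinguishing all the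
profiles in `𝔓`. -/
theorem efficient_tree_of_tangles (𝒱 : SubmodUniverse U) (k : ℕ)
    (𝔓 : Set (Set U))
    (h𝔓 : ∀ P ∈ 𝔓, IsProfile 𝒱.toSepUniverse (Sk 𝒱 k) P ∧ Regular 𝒱.toSepUniverse P) :
    ∃ N : Set U, N ⊆ Sk 𝒱 k ∧ NestedSet 𝒱.toSepUniverse N ∧
      ∀ P ∈ 𝔓, ∀ Q ∈ 𝔓, P ≠ Q → ∃ s ∈ N, EffDistinguishes 𝒱 s P Q := by
  classical
  set D : Set U := {u | ∃ P ∈ 𝔓, ∃ Q ∈ 𝔓, P ≠ Q ∧ EffDistinguishes 𝒱 u P Q} with hD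
  obtain ⟨N, hN, hNmax⟩ : ∃ N : Finset U,
      (((N : Set U)) ⊆ D ∧ NestedSet 𝒱.toSepUniverse (N : Set U)) ∧
      ∀ M : Finset U, ((M : Set U) ⊆ D ∧ NestedSet 𝒱.toSepUniverse (M : Set U)) →
        M.card ≤ N.card := by
    obtain ⟨N, hN1, hN2⟩ := Finset.exists_max_image
      (Finset.univ.filter (fun M : Finset U =>
        (M : Set U) ⊆ D ∧ NestedSet 𝒱.toSepUniverse (M : Set U)))
      Finset.card
      ⟨∅, Finset.mem_filter.mpr ⟨Finset.mem_univ _, by simp,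
        fun r hr => absurd hr (by simp)⟩⟩
    exact ⟨N, (Finset.mem_filter.mp hN1).2,
      fun M hM => hN2 M (Finset.mem_filter.mpr ⟨Finset.mem_univ _, hM⟩)⟩
  refine ⟨(N : Set U), ?_, hN.2, ?_⟩
  · intro u hu
    obtain ⟨P, hP, Q, hQ, hne, heff⟩ := hN.1 hu
    exact dist_ord_lt (h𝔓 P hP).1 heff.1
  · intro P hP Q hQ hne
    obtain ⟨s₀, hs₀⟩ := exists_eff (𝒱 := 𝒱) (k := k) (h𝔓 P hP).1 (h𝔓 Q hQ).1 hne
    have main : ∀ n : ℕ, ∀ s : U, EffDistinguishes 𝒱 s P Q →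
        (N.filter (fun u => ¬ Nested 𝒱.toSepUniverse u s)).card ≤ n →
        ∃ c ∈ (N : Set U), EffDistinguishes 𝒱 c P Q := by
      intro n
      induction n with
      | zero =>
        intro s hs hcard
        have hall : ∀ u ∈ N, Nested 𝒱.toSepUniverse u s := by
          intro u hu
          by_contra hnn
          have hmem : u ∈ N.filter (fun u => ¬ Nested 𝒱.toSepUniverse u s) :=
            Finset.mem_filter.mpr ⟨hu, hnn⟩
          have := Finset.card_pos.mpr ⟨u, hmem⟩
          omega
        have hsD : s ∈ D := ⟨P, hP, Q, hQ, hne, hs⟩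
        by_cases hsN : s ∈ N
        · exact ⟨s, hsN, hs⟩
        · exfalso
          have hins : ((insert s N : Finset U) : Set U) ⊆ D ∧
              NestedSet 𝒱.toSepUniverse ((insert s N : Finset U) : Set U) := by
            rw [Finset.coe_insert]
            constructor
            · intro u hu
              rcases Set.mem_insert_iff.mp hu with rfl | hu
              · exact hsD
              · exact hN.1 hu
            · intro r hr u hu
              rcases Set.mem_insert_iff.mp hr with hr' | hr'
              · rcases Set.mem_insert_iff.mp hu with hu' | hu'
                · rw [hr', hu']
                  exact nested_refl _ _
                · rw [hr']
                  exact nested_symm (hall u (Finset.mem_coe.mp hu'))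
              · rcases Set.mem_insert_iff.mp hu with hu' | hu'
                · rw [hu']
                  exact hall r (Finset.mem_coe.mp hr')
                · exact hN.2 r hr' u hu'
          have hcard2 := hNmax _ hins
          rw [Finset.card_insert_of_notMem hsN] at hcard2
          omega
      | succ n ih =>
        intro s hs hcard
        by_cases hle : (N.filter (fun u => ¬ Nested 𝒱.toSepUniverse u s)).card ≤ n
        · exact ih s hs hle
        · have hpos : 0 < (N.filter (fun u => ¬ Nested 𝒱.toSepUniverse u s)).card := by
            omega
          obtain ⟨t, ht⟩ := Finset.card_pos.mp hpos
          have htN : t ∈ N := (Finset.mem_filter.mp ht).1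
          have htns : ¬ Nested 𝒱.toSepUniverse t s := (Finset.mem_filter.mp ht).2
          obtain ⟨P', hP'𝔓, Q', hQ'𝔓, hne', heff'⟩ := hN.1 htN
          have hcross : ¬ Nested 𝒱.toSepUniverse s t := fun h => htns (nested_symm h)
          obtain ⟨c, hceff, hct, hcu⟩ := key_lemma (h𝔓 P hP).1 (h𝔓 P hP).2
            (h𝔓 Q hQ).1 (h𝔓 Q hQ).2 (h𝔓 P' hP'𝔓).1 (h𝔓 P' hP'𝔓).2
            (h𝔓 Q' hQ'𝔓).1 (h𝔓 Q' hQ'𝔓).2 hs heff' hcross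
          apply ih c hceff
          have hsub : N.filter (fun u => ¬ Nested 𝒱.toSepUniverse u c) ⊆
              (N.filter (fun u => ¬ Nested 𝒱.toSepUniverse u s)).erase t := by
            intro u hu
            obtain ⟨huN, hnc⟩ := Finset.mem_filter.mp hu
            refine Finset.mem_erase.mpr ⟨?_, Finset.mem_filter.mpr ⟨huN, ?_⟩⟩
            · rintro rfl
              exact hnc (nested_symm hct)
            · intro hus
              exact hnc (hcu u hus (hN.2 u huN t htN))
          have hle2 := Finset.card_le_card hsub
          rw [Finset.card_erase_of_mem ht] at hle2
          omega
    exact main N.card s₀ hs₀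
      (Finset.card_le_card (Finset.filter_subset _ _))

end SepDemo
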